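/- Let X be an A–B Hilbert bimodule with linking algebra structure, and suppose X is left-full, i.e., clspn{_A⟨X,X⟩} = A. Let J = clspn{⟨X,X⟩_B}, so X is an A–J imprimitivity bimodule. Let K_A be an ideal of A and K_B an ideal of B, and set K_J = J ∩ K_B. If K_A = X-Ind_J K_J (Rieffel induction over J), then K_A = X-Ind_B K_B (induction over B). -/

import Mathlib

open scoped MultiplierAlgebra

noncomputable section

/-- A C*-correspondence from `A` to `B` with underlying Banach space `X`:
a right Hilbert `B`-module with a left action of `A` by adjointable operators. -/
structure CStarCorr (A B X : Type*) [NonUnitalCStarAlgebra A] [NonUnitalCStarAlgebra B]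
    [NormedAddCommGroup X] [NormedSpace ℂ X] [CompleteSpace X] : Type _ where
  lsmul : A → X → X
  rsmul : X → B → X
  inner : X → X → B
  add_rsmul : ∀ (x y : X) (b : B), rsmul (x + y) b = rsmul x b + rsmul y b
  rsmul_add : ∀ (x : X) (b c : B), rsmul x (b + c) = rsmul x b + rsmul x c
  rsmul_mul : ∀ (x : X) (b c : B), rsmul (rsmul x b) c = rsmul x (b * c)
  smul_rsmul : ∀ (z : ℂ) (x : X) (b : B), rsmul (z • x) b = z • rsmul x b
  rsmul_smul : ∀ (z : ℂ) (x : X) (b : B), rsmul x (z • b) = z • rsmul x b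
  inner_add_right : ∀ (x y z : X), inner x (y + z) = inner x y + inner x z
  inner_smul_right : ∀ (z : ℂ) (x y : X), inner x (z • y) = z • inner x y
  inner_rsmul_right : ∀ (x y : X) (b : B), inner x (rsmul y b) = inner x y * b
  star_inner : ∀ (x y : X), star (inner x y) = inner y x
  norm_inner_self : ∀ x : X, ‖inner x x‖ = ‖x‖ ^ 2
  lsmul_add : ∀ (a : A) (x y : X), lsmul a (x + y) = lsmul a x + lsmul a y
  add_lsmul : ∀ (a b : A) (x : X), lsmul (a + b) x = lsmul a x + lsmul b x
  mul_lsmul : ∀ (a b : A) (x : X), lsmul (a * b) x = lsmul a (lsmul b x)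
  smul_lsmul : ∀ (z : ℂ) (a : A) (x : X), lsmul (z • a) x = z • lsmul a x
  lsmul_smul : ∀ (z : ℂ) (a : A) (x : X), lsmul a (z • x) = z • lsmul a x
  lsmul_rsmul : ∀ (a : A) (x : X) (b : B), lsmul a (rsmul x b) = rsmul (lsmul a x) b
  inner_lsmul_left : ∀ (a : A) (x y : X), inner (lsmul a x) y = inner x (lsmul (star a) y)

namespace CStarCorr

variable {A B X : Type*} [NonUnitalCStarAlgebra A] [NonUnitalCStarAlgebra B]
    [NormedAddCommGroup X] [NormedSpace ℂ X] [CompleteSpace X]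

/-- `X·S`: the closed submodule of `X` generated by right multiplication by `S ⊆ B`. -/
def smulIdeal (c : CStarCorr A B X) (S : Set B) : Set X :=
  closure (Submodule.span ℂ {z : X | ∃ x b, b ∈ S ∧ z = c.rsmul x b} : Set X)

/-- The ideal of `A` induced from `S ⊆ B` via `X`:  `X-Ind S = {a | a·X ⊆ X·S}`. -/
def ind (c : CStarCorr A B X) (S : Set B) : Set A :=
  {a : A | ∀ x : X, c.lsmul a x ∈ c.smulIdeal S}

end CStarCorr

/-- An `A`–`B` Hilbert bimodule: a C*-correspondence with a compatible left `A`-valued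
inner product. -/
structure CStarBimod (A B X : Type*) [NonUnitalCStarAlgebra A] [NonUnitalCStarAlgebra B]
    [NormedAddCommGroup X] [NormedSpace ℂ X] [CompleteSpace X]
    extends CStarCorr A B X where
  linner : X → X → A
  linner_add_left : ∀ (x y z : X), linner (x + y) z = linner x z + linner y z
  linner_smul_left : ∀ (z : ℂ) (x y : X), linner (z • x) y = z • linner x y
  star_linner : ∀ (x y : X), star (linner x y) = linner y x
  linner_lsmul_left : ∀ (a : A) (x y : X), linner (lsmul a x) y = a * linner x y
  imprim : ∀ (x y z : X), lsmul (linner x y) z = rsmul x (inner y z)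

/-- Left-fullness of a Hilbert bimodule: the left inner products span a dense
subspace of `A`. -/
def CStarBimod.LeftFull {A B X : Type*} [NonUnitalCStarAlgebra A] [NonUnitalCStarAlgebra B]
    [NormedAddCommGroup X] [NormedSpace ℂ X] [CompleteSpace X] (c : CStarBimod A B X) : Prop :=
  closure (Submodule.span ℂ {a : A | ∃ x y, a = c.linner x y} : Set A) = Set.univ

/-- Right-fullness: the `B`-valued inner products span a dense subspace of `B`. -/
def CStarBimod.RightFull {A B X : Type*} [NonUnitalCStarAlgebra A] [NonUnitalCStarAlgebra B]
    [NormedAddCommGroup X] [NormedSpace ℂ X] [CompleteSpace X] (c : CStarBimod A B X) : Prop :=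
  closure (Submodule.span ℂ {b : B | ∃ x y, b = c.inner x y} : Set B) = Set.univ

end

noncomputable section

namespace CStarCorr

variable {A B X : Type*} [NonUnitalCStarAlgebra A] [NonUnitalCStarAlgebra B]
    [NormedAddCommGroup X] [NormedSpace ℂ X] [CompleteSpace X] (c : CStarCorr A B X)

lemma keyIneq' (d t : ℝ) (hd0 : 0 < d) :
    |t * d ^ 2 / (d + t ^ 2) ^ 2| ≤ Real.sqrt d := by
  set s : ℝ := Real.sqrt d with hs
  have hs0 : 0 < s := Real.sqrt_pos.mpr hd0
  have hs2 : s ^ 2 = d := Real.sq_sqrt hd0.le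
  rw [abs_div, abs_of_pos (by positivity : (0:ℝ) < (d + t ^ 2) ^ 2),
    div_le_iff₀ (by positivity), abs_mul,
    abs_of_pos (by positivity : (0:ℝ) < d ^ 2), ← hs2]
  have ht : |t| ^ 2 = t ^ 2 := sq_abs t
  have h1 : 2 * s * |t| ≤ s ^ 2 + t ^ 2 := by nlinarith [sq_nonneg (s - |t|)]
  have h2 : 2 * s * |t| * (s ^ 2 + t ^ 2) ≤ (s ^ 2 + t ^ 2) * (s ^ 2 + t ^ 2) :=
    mul_le_mul_of_nonneg_right h1 (by positivity)
  have h3 : 2 * s * |t| * s ^ 2 ≤ 2 * s * |t| * (s ^ 2 + t ^ 2) := by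
    nlinarith [mul_nonneg (mul_nonneg hs0.le (abs_nonneg t)) (sq_nonneg t)]
  nlinarith [mul_le_mul_of_nonneg_left (h3.trans h2) hs0.le,
    mul_nonneg (mul_nonneg (mul_nonneg hs0.le hs0.le) (mul_nonneg hs0.le hs0.le))
      (abs_nonneg t)]

lemma sub_rsmul' (x y : X) (b : B) :
    c.rsmul (x - y) b = c.rsmul x b - c.rsmul y b := by
  rw [sub_eq_add_neg, ← neg_one_smul ℂ y, c.add_rsmul, c.smul_rsmul, neg_one_smul,
    ← sub_eq_add_neg]

lemma inner_sub_right' (x y z : X) :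
    c.inner x (y - z) = c.inner x y - c.inner x z := by
  rw [sub_eq_add_neg, ← neg_one_smul ℂ z, c.inner_add_right, c.inner_smul_right, neg_one_smul,
    ← sub_eq_add_neg]

lemma inner_sub_left' (x y z : X) :
    c.inner (x - y) z = c.inner x z - c.inner y z := by
  rw [← c.star_inner z, c.inner_sub_right', star_sub, c.star_inner, c.star_inner]

lemma inner_rsmul_left' (x y : X) (b : B) :
    c.inner (c.rsmul x b) y = star b * c.inner x y := by
  rw [← c.star_inner y, c.inner_rsmul_right, star_mul, c.star_inner]

lemma norm_rsmul_le' (x : X) (b : B) : ‖c.rsmul x b‖ ≤ ‖x‖ * ‖b‖ := by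
  have h1 : c.inner (c.rsmul x b) (c.rsmul x b) = star b * c.inner x x * b := by
    rw [c.inner_rsmul_right, c.inner_rsmul_left']
  have h2 : ‖c.rsmul x b‖ ^ 2 ≤ (‖x‖ * ‖b‖) ^ 2 := by
    rw [← c.norm_inner_self, h1]
    calc ‖star b * c.inner x x * b‖ ≤ ‖star b * c.inner x x‖ * ‖b‖ := norm_mul_le _ _
      _ ≤ ‖star b‖ * ‖c.inner x x‖ * ‖b‖ := by
          gcongr; exact norm_mul_le _ _
      _ = ‖b‖ * ‖x‖ ^ 2 * ‖b‖ := by rw [norm_star, c.norm_inner_self]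
      _ = (‖x‖ * ‖b‖) ^ 2 := by ring
  nlinarith [norm_nonneg (c.rsmul x b), mul_nonneg (norm_nonneg x) (norm_nonneg b)]

/-- The key approximation lemma: every `x` is approximately of the form
`x · (⟨x,x⟩ * v)`, via the non-unital continuous functional calculus applied
to `⟨x,x⟩`. -/
lemma approx' (x : X) {ε : ℝ} (hε : 0 < ε) :
    ∃ v : B, ‖x - c.rsmul x (c.inner x x * v)‖ < ε := by
  set b₀ : B := c.inner x x with hb₀
  have sa : IsSelfAdjoint b₀ := c.star_inner x x
  obtain ⟨d, hd0, hsqrtd⟩ : ∃ d : ℝ, 0 < d ∧ Real.sqrt d = ε ^ 2 / 2 :=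
    ⟨(ε ^ 2 / 2) ^ 2, by positivity, Real.sqrt_sq (by positivity)⟩
  set h : ℝ → ℝ := fun t => t / (d + t ^ 2) with hh
  have hcont : Continuous h := by
    apply Continuous.div continuous_id (by fun_prop)
    intro t; positivity
  have h0 : h 0 = 0 := by simp [hh]
  set f : ℝ → ℝ := fun t => t * h t with hf
  have hfc : Continuous f := continuous_id.mul hcont
  have hf0 : f 0 = 0 := by simp [hf, h0]
  set v : B := cfcₙ h b₀ with hv
  set u : B := b₀ * v with hu
  have huf : u = cfcₙ f b₀ := by
    rw [hu, hv, hf]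
    rw [cfcₙ_mul (fun t : ℝ => t) h b₀ (continuous_id.continuousOn) rfl
      (hcont.continuousOn) h0, cfcₙ_id' ℝ b₀]
  have hsu : star u = u := by
    rw [huf]; exact (IsSelfAdjoint.cfcₙ (f := f) (a := b₀)).star_eq
  -- expand the inner product of the difference
  set r : X := c.rsmul x u with hr
  have hinner : c.inner (x - r) (x - r) = b₀ - b₀ * u - u * b₀ + u * b₀ * u := by
    have h1 : c.inner x r = b₀ * u := by rw [hr, c.inner_rsmul_right, hb₀]
    have h2 : c.inner r x = u * b₀ := by
      rw [hr, c.inner_rsmul_left', hsu, hb₀]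
    have h3 : c.inner r r = u * b₀ * u := by
      rw [hr, c.inner_rsmul_right, ← hr, h2]
    rw [c.inner_sub_left', c.inner_sub_right', c.inner_sub_right', h1, h2, h3, ← hb₀]
    abel
  -- identify it with a functional calculus element
  set g : ℝ → ℝ := fun t => t - t * f t - f t * t + f t * t * f t with hg
  have hgc : Continuous g := by fun_prop
  have hg0 : g 0 = 0 := by simp [hg, hf0]
  have hcfc : c.inner (x - r) (x - r) = cfcₙ g b₀ := by
    rw [hinner, hg]
    have c1 : Continuous (fun t : ℝ => t - t * f t - f t * t) := by fun_prop
    have c2 : Continuous (fun t : ℝ => f t * t * f t) := by fun_prop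
    have c3 : Continuous (fun t : ℝ => t - t * f t) := by fun_prop
    have c4 : Continuous (fun t : ℝ => f t * t) := by fun_prop
    have c5 : Continuous (fun t : ℝ => t * f t) := by fun_prop
    rw [cfcₙ_add (fun t : ℝ => t - t * f t - f t * t) (fun t => f t * t * f t) b₀
      c1.continuousOn (by simp [hf0]) c2.continuousOn (by simp [hf0]),
      cfcₙ_sub (fun t : ℝ => t - t * f t) (fun t => f t * t) b₀
      c3.continuousOn (by simp [hf0]) c4.continuousOn (by simp [hf0]),
      cfcₙ_sub (fun t : ℝ => t) (fun t => t * f t) b₀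
      continuous_id.continuousOn rfl c5.continuousOn (by simp [hf0]),
      cfcₙ_mul (fun t : ℝ => t) f b₀ continuous_id.continuousOn rfl
      hfc.continuousOn hf0,
      cfcₙ_mul (fun t : ℝ => f t * t) f b₀ c4.continuousOn (by simp [hf0])
      hfc.continuousOn hf0,
      cfcₙ_mul f (fun t : ℝ => t) b₀ hfc.continuousOn hf0
      continuous_id.continuousOn rfl,
      cfcₙ_id' ℝ b₀, ← huf]
  -- pointwise bound for `g`
  have hgbound : ∀ t : ℝ, |g t| ≤ Real.sqrt d := by
    intro t
    have hgt : g t = t * d ^ 2 / (d + t ^ 2) ^ 2 := by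
      simp only [hg, hf, hh]
      have hne : d + t ^ 2 ≠ 0 := by positivity
      field_simp
      ring
    rw [hgt]
    exact keyIneq' d t hd0
  have hnorm : ‖c.inner (x - r) (x - r)‖ ≤ Real.sqrt d := by
    rw [hcfc]
    exact norm_cfcₙ_le fun t _ => by simpa [Real.norm_eq_abs] using hgbound t
  have hlt : ‖x - r‖ ^ 2 < ε ^ 2 := by
    rw [← c.norm_inner_self]
    calc ‖c.inner (x - r) (x - r)‖ ≤ Real.sqrt d := hnorm
      _ = ε ^ 2 / 2 := hsqrtd
      _ < ε ^ 2 := by nlinarith [pow_pos hε 2]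
  have hfin : ‖x - r‖ < ε := lt_of_pow_lt_pow_left₀ 2 hε.le hlt
  exact ⟨v, by rwa [hr, hu] at hfin⟩

lemma smulIdeal_mono {S T : Set B} (hST : S ⊆ T) : c.smulIdeal S ⊆ c.smulIdeal T := by
  apply closure_mono
  apply Submodule.span_mono
  rintro z ⟨x, b, hb, rfl⟩
  exact ⟨x, b, hST hb, rfl⟩

lemma isClosed_smulIdeal (S : Set B) : IsClosed (c.smulIdeal S) := isClosed_closure

lemma smulIdeal_submodule (S : Set B) :
    ∃ M : Submodule ℂ X, (M : Set X) = c.smulIdeal S := by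
  exact ⟨(Submodule.span ℂ {z : X | ∃ x b, b ∈ S ∧ z = c.rsmul x b}).topologicalClosure,
    rfl⟩

end CStarCorr

/-- KLQ "Coaction functors, II": let `X` be a left-full `A`–`B` Hilbert bimodule and
`J = clspan⟨X,X⟩_B`, so `X` is an `A`–`J` imprimitivity bimodule.  If
`K_A = X-Ind_J (J ∩ K_B)` then `K_A = X-Ind_B K_B`. -/
theorem left_full_induction {A B X : Type*}
    [NonUnitalCStarAlgebra A] [NonUnitalCStarAlgebra B]
    [NormedAddCommGroup X] [NormedSpace ℂ X] [CompleteSpace X]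
    (c : CStarBimod A B X) (hlf : c.LeftFull)
    (J : Set B)
    (hJ : J = closure (Submodule.span ℂ
        {b : B | ∃ x y, b = c.toCStarCorr.inner x y} : Set B))
    (KA : TwoSidedIdeal A) (hKA : IsClosed (KA : Set A))
    (KB : TwoSidedIdeal B) (hKB : IsClosed (KB : Set B))
    (h : (KA : Set A) = c.toCStarCorr.ind (J ∩ (KB : Set B))) :
    (KA : Set A) = c.toCStarCorr.ind (KB : Set B) := by
  set E := c.toCStarCorr with hE
  have key : E.smulIdeal (J ∩ (KB : Set B)) = E.smulIdeal (KB : Set B) := by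
    apply Set.Subset.antisymm
    · exact E.smulIdeal_mono Set.inter_subset_right
    · -- the hard direction: `X·K_B ⊆ X·(J ∩ K_B)`
      obtain ⟨M, hM⟩ := E.smulIdeal_submodule (J ∩ (KB : Set B))
      have hgen : {z : X | ∃ x b, b ∈ (KB : Set B) ∧ z = E.rsmul x b} ⊆ (M : Set X) := by
        rintro z ⟨x, b, hb, rfl⟩
        rw [hM]
        rcases eq_or_ne b 0 with rfl | hbne
        · have hz : E.rsmul x 0 = 0 := by
            have h0 := E.rsmul_add x 0 0
            rw [add_zero] at h0
            exact left_eq_add.mp h0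
          rw [hz]
          exact subset_closure (Submodule.zero_mem _)
        · rw [CStarCorr.smulIdeal, Metric.mem_closure_iff]
          intro ε hε
          have hbnorm : 0 < ‖b‖ := norm_pos_iff.mpr hbne
          obtain ⟨v, hv⟩ := E.approx' x (div_pos hε hbnorm)
          set u : B := E.inner x x * v with hu
          refine ⟨E.rsmul x (u * b), ?_, ?_⟩
          · -- the approximant lies in the span of generators for `J ∩ K_B`
            apply Submodule.subset_span
            refine ⟨x, u * b, ⟨?_, ?_⟩, rfl⟩
            · -- `u * b ∈ J`
              have : u * b = E.inner x (E.rsmul x (v * b)) := by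
                rw [hu, mul_assoc, ← E.inner_rsmul_right]
              rw [hJ, this]
              exact subset_closure (Submodule.subset_span ⟨x, E.rsmul x (v * b), rfl⟩)
            · -- `u * b ∈ K_B`
              exact KB.mul_mem_left u b hb
          · -- distance estimate
            rw [dist_eq_norm]
            have h1 : E.rsmul x (u * b) = E.rsmul (E.rsmul x u) b := (E.rsmul_mul x u b).symm
            rw [h1, ← E.sub_rsmul']
            calc ‖E.rsmul (x - E.rsmul x u) b‖ ≤ ‖x - E.rsmul x u‖ * ‖b‖ :=
                E.norm_rsmul_le' _ _
              _ < ε / ‖b‖ * ‖b‖ := by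
                  apply mul_lt_mul_of_pos_right _ hbnorm
                  simpa [hu] using hv
              _ = ε := div_mul_cancel₀ ε hbnorm.ne'
      have hspan : (Submodule.span ℂ
          {z : X | ∃ x b, b ∈ (KB : Set B) ∧ z = E.rsmul x b} : Set X) ⊆ (M : Set X) :=
        Submodule.span_le.mpr hgen
      have hMclosed : IsClosed (M : Set X) := by
        rw [hM]; exact E.isClosed_smulIdeal _
      calc E.smulIdeal (KB : Set B) ⊆ (M : Set X) := closure_minimal hspan hMclosed
        _ = E.smulIdeal (J ∩ (KB : Set B)) := hM
  rw [h]
  unfold CStarCorr.ind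
  rw [key]

end
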